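/- Let m be a positive integer such that 5m² − 2m + 1 is square-free, and let α be a root of f = mx² + (m−1)x − m. Then f is irreducible over ℚ, K = ℚ(α) is a real quadratic field with discriminant D = 5m² − 2m + 1, and H(α)/√D = m/√(5m² − 2m + 1). In particular H(α)/√D tends to 1/√5 as m → ∞. -/

import Mathlib

open NumberField IntermediateField Polynomial Filter

section auxx
variable (m : ℤ)

lemma aux_sq_ne (hm : 0 < m) (hsf : Squarefree (5 * m ^ 2 - 2 * m + 1))
    (r : ℚ) : r ^ 2 ≠ ((5 * m ^ 2 - 2 * m + 1 : ℤ) : ℚ) := by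
  intro h
  have hint : IsIntegral ℤ r := by
    refine ⟨X ^ 2 - C (5 * m ^ 2 - 2 * m + 1), monic_X_pow_sub_C _ (by norm_num), ?_⟩
    rw [eval₂_sub, eval₂_X_pow, eval₂_C, eq_intCast, h, sub_self]
  obtain ⟨n, hn⟩ := IsIntegrallyClosed.isIntegral_iff.mp hint
  have hn2 : n ^ 2 = 5 * m ^ 2 - 2 * m + 1 := by
    have : ((n ^ 2 : ℤ) : ℚ) = ((5 * m ^ 2 - 2 * m + 1 : ℤ) : ℚ) := by
      rw [← h, ← hn, eq_intCast]; push_cast; ring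
    exact_mod_cast this
  have hu : IsUnit n := hsf n ⟨1, by rw [← hn2]; ring⟩
  have h1 : n = 1 ∨ n = -1 := Int.isUnit_iff.mp hu
  have h2 : n ^ 2 = 1 := by rcases h1 with h | h <;> simp [h]
  nlinarith [hn2, h2]

lemma aux_no_root (hm : 0 < m) (hsf : Squarefree (5 * m ^ 2 - 2 * m + 1))
    (q : ℚ) (h : (m : ℚ) * q ^ 2 + ((m : ℚ) - 1) * q - (m : ℚ) = 0) : False := by
  refine aux_sq_ne m hm hsf (2 * m * q + (m - 1)) ?_
  push_cast
  linear_combination (4 * (m : ℚ)) * h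

lemma aux_no_root_g (hm : 0 < m) (hsf : Squarefree (5 * m ^ 2 - 2 * m + 1))
    (q : ℚ) (h : q ^ 2 + ((m : ℚ) - 1) * q - (m : ℚ) ^ 2 = 0) : False := by
  refine aux_sq_ne m hm hsf (2 * q + (m - 1)) ?_
  push_cast
  linear_combination 4 * h

lemma aux_irred (hm : 0 < m) (hsf : Squarefree (5 * m ^ 2 - 2 * m + 1)) :
    Irreducible (Polynomial.C (m : ℚ) * Polynomial.X ^ 2 +
        Polynomial.C ((m : ℚ) - 1) * Polynomial.X - Polynomial.C (m : ℚ)) := by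
  have hm0 : (m : ℚ) ≠ 0 := Int.cast_ne_zero.mpr hm.ne'
  have hdeg : (Polynomial.C (m : ℚ) * Polynomial.X ^ 2 +
        Polynomial.C ((m : ℚ) - 1) * Polynomial.X - Polynomial.C (m : ℚ)).natDegree = 2 := by
    rw [show (Polynomial.C (m : ℚ) * Polynomial.X ^ 2 +
        Polynomial.C ((m : ℚ) - 1) * Polynomial.X - Polynomial.C (m : ℚ)) =
      Polynomial.C (m : ℚ) * Polynomial.X ^ 2 +
        Polynomial.C ((m : ℚ) - 1) * Polynomial.X + Polynomial.C (-(m : ℚ)) by rw [C_neg]; ring]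
    exact natDegree_quadratic hm0
  rw [irreducible_iff_roots_eq_zero_of_degree_le_three hdeg.ge (by rw [hdeg]; norm_num),
    Multiset.eq_zero_iff_forall_notMem]
  intro q hq
  have hne : (Polynomial.C (m : ℚ) * Polynomial.X ^ 2 +
        Polynomial.C ((m : ℚ) - 1) * Polynomial.X - Polynomial.C (m : ℚ)) ≠ 0 := by
    intro h0
    rw [h0] at hdeg
    simp at hdeg
  rw [mem_roots hne] at hq
  rw [IsRoot.def] at hq
  simp only [eval_sub, eval_add, eval_mul, eval_pow, eval_C, eval_X] at hq
  exact aux_no_root m hm hsf q hq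

lemma aux_discr (K : Type*) [Field K] [NumberField K] {ι : Type*} [Fintype ι] [DecidableEq ι]
    (b' : Module.Basis ι ℚ K) (h : ∀ i, IsIntegral ℤ (b' i)) :
    ∃ q : ℤ, Algebra.discr ℚ ⇑b' = (q : ℚ) ^ 2 * (NumberField.discr K : ℚ) := by
  classical
  set b₀ := NumberField.integralBasis K with hb₀
  set e := b₀.indexEquiv b' with he
  set b := b₀.reindex e with hb
  have hint : ∀ i j, IsIntegral ℤ (b.toMatrix b' i j) := by
    intro i j
    have heq : b.toMatrix b' i j = b₀.repr (b' j) (e.symm i) := by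
      rw [Module.Basis.toMatrix_apply, hb, Module.Basis.repr_reindex_apply]
    rw [heq]
    obtain ⟨y, hy⟩ : ∃ y : 𝓞 K, algebraMap (𝓞 K) K y = b' j := ⟨⟨b' j, h j⟩, rfl⟩
    rw [← hy, NumberField.integralBasis_repr_apply]
    exact isIntegral_algebraMap
  have hdet : IsIntegral ℤ (b.toMatrix b').det := IsIntegral.det fun i j => hint i j
  obtain ⟨q, hq⟩ := IsIntegrallyClosed.isIntegral_iff.mp hdet
  refine ⟨q, ?_⟩
  have h1 : ⇑b' = Matrix.vecMul ⇑b ((b.toMatrix b').map (algebraMap ℚ K)) :=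
    (b.toMatrix_map_vecMul b').symm
  have h2 : Algebra.discr ℚ ⇑b = (NumberField.discr K : ℚ) := by
    rw [hb, Module.Basis.coe_reindex, Algebra.discr_reindex]
    exact (NumberField.coe_discr K).symm
  rw [h1, Algebra.discr_of_matrix_vecMul, ← hq, eq_intCast, h2]

end auxx

lemma aux_tendsto :
    Tendsto (fun k : ℕ => (k : ℝ) / Real.sqrt (5 * (k : ℝ) ^ 2 - 2 * (k : ℝ) + 1)) atTop
      (nhds (1 / Real.sqrt 5)) := by
  have h1 : Tendsto (fun k : ℕ => ((k : ℝ))⁻¹) atTop (nhds 0) :=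
    tendsto_inv_atTop_nhds_zero_nat
  have hc : ContinuousAt (fun u : ℝ => 1 / Real.sqrt (5 - 2 * u + u ^ 2)) 0 := by
    have h5 : Real.sqrt (5 - 2 * 0 + 0 ^ 2) ≠ 0 := by
      rw [show (5 - 2 * 0 + 0 ^ 2 : ℝ) = 5 by ring]
      positivity
    exact (continuousAt_const.div ((Real.continuous_sqrt.continuousAt).comp
      (by fun_prop)) h5)
  have hc' : Tendsto (fun u : ℝ => 1 / Real.sqrt (5 - 2 * u + u ^ 2)) (nhds 0)
      (nhds (1 / Real.sqrt 5)) := by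
    have := hc.tendsto
    norm_num at this ⊢
    exact this
  refine ((hc'.comp h1).congr' ?_)
  filter_upwards [eventually_ge_atTop 1] with k hk
  simp only [Function.comp_apply]
  have hk0 : (0:ℝ) < (k:ℝ) := by exact_mod_cast hk
  have hpos : (0:ℝ) ≤ 5 * (k:ℝ)^2 - 2*(k:ℝ) + 1 := by nlinarith
  have key : 5 - 2 * ((k:ℝ))⁻¹ + ((k:ℝ))⁻¹ ^ 2 = (5 * (k:ℝ)^2 - 2*(k:ℝ) + 1) / (k:ℝ)^2 := by
    field_simp
  rw [key, Real.sqrt_div hpos, Real.sqrt_sq hk0.le]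
  rw [one_div, inv_div]

theorem small_generators_real_quadratic_example
    (m : ℤ) (hm : 0 < m) (hsf : Squarefree (5 * m ^ 2 - 2 * m + 1))
    (K : Type*) [Field K] [NumberField K]
    (α : K) (hroot : (m : K) * α ^ 2 + ((m : K) - 1) * α - (m : K) = 0)
    (hgen : ℚ⟮α⟯ = ⊤) :
    Irreducible (Polynomial.C (m : ℚ) * Polynomial.X ^ 2 +
        Polynomial.C ((m : ℚ) - 1) * Polynomial.X - Polynomial.C (m : ℚ)) ∧
    Module.finrank ℚ K = 2 ∧
    NumberField.discr K = 5 * m ^ 2 - 2 * m + 1 ∧ 0 < NumberField.discr K ∧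
    ((max |m| (max |m - 1| |(-m)|) : ℤ) : ℝ) / Real.sqrt (NumberField.discr K : ℝ) =
      (m : ℝ) / Real.sqrt (5 * (m : ℝ) ^ 2 - 2 * (m : ℝ) + 1) ∧
    Tendsto (fun k : ℕ => (k : ℝ) / Real.sqrt (5 * (k : ℝ) ^ 2 - 2 * (k : ℝ) + 1)) atTop
      (nhds (1 / Real.sqrt 5)) := by
  have hm0K : (m : K) ≠ 0 := Int.cast_ne_zero.mpr hm.ne'
  have hfirr := aux_irred m hm hsf
  have hα : IsIntegral ℚ α := IsIntegral.of_finite ℚ α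
  have haev : (aeval α) (Polynomial.C (m : ℚ) * Polynomial.X ^ 2 +
      Polynomial.C ((m : ℚ) - 1) * Polynomial.X - Polynomial.C (m : ℚ)) = 0 := by
    simp only [map_sub, map_add, map_mul, map_pow, aeval_C, aeval_X]
    simp only [map_sub, map_one, map_intCast]
    exact hroot
  have hdvd := minpoly.dvd ℚ α haev
  have hassoc : Associated (minpoly ℚ α)
      (Polynomial.C (m : ℚ) * Polynomial.X ^ 2 +
        Polynomial.C ((m : ℚ) - 1) * Polynomial.X - Polynomial.C (m : ℚ)) :=
    (minpoly.irreducible hα).associated_of_dvd hfirr hdvd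
  have hdegf : (Polynomial.C (m : ℚ) * Polynomial.X ^ 2 +
        Polynomial.C ((m : ℚ) - 1) * Polynomial.X - Polynomial.C (m : ℚ)).natDegree = 2 := by
    rw [show (Polynomial.C (m : ℚ) * Polynomial.X ^ 2 +
        Polynomial.C ((m : ℚ) - 1) * Polynomial.X - Polynomial.C (m : ℚ)) =
      Polynomial.C (m : ℚ) * Polynomial.X ^ 2 +
        Polynomial.C ((m : ℚ) - 1) * Polynomial.X + Polynomial.C (-(m : ℚ)) by rw [C_neg]; ring]
    exact natDegree_quadratic (Int.cast_ne_zero.mpr hm.ne')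
  have hdegα : (minpoly ℚ α).natDegree = 2 := by
    rw [natDegree_eq_of_degree_eq (degree_eq_degree_of_associated hassoc), hdegf]
  have hrank : Module.finrank ℚ K = 2 := by
    rw [← IntermediateField.finrank_top', ← hgen, IntermediateField.adjoin.finrank hα, hdegα]
  -- β = m α is an algebraic integer with β² + (m-1)β - m² = 0
  set β : K := (m : K) * α with hβ
  have hβroot : β ^ 2 + ((m : K) - 1) * β - (m : K) ^ 2 = 0 := by
    rw [hβ]; linear_combination (m : K) * hroot
  have hβint : IsIntegral ℤ β := by
    refine ⟨X ^ 2 + (C (m - 1) * X + C (-(m ^ 2))), ?_, ?_⟩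
    · exact monic_X_pow_add ((degree_linear_le).trans_lt (by norm_num))
    · simp only [eval₂_add, eval₂_mul, eval₂_X_pow, eval₂_X, eval₂_C]
      simp only [eq_intCast]
      push_cast
      linear_combination hβroot
  have hβ0 : β ≠ 0 := by
    intro h0
    have hα0 : α = 0 := by
      have hmα : (m : K) * α = 0 := by rw [← hβ]; exact h0
      rcases mul_eq_zero.mp hmα with h | h
      · exact absurd h hm0K
      · exact h
    rw [hα0] at hroot
    simp at hroot
    exact hm0K (by exact_mod_cast hroot)
  have hβnotrat : ∀ a : ℚ, a • β ≠ (1 : K) := by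
    intro a hcontra
    have ha : a ≠ 0 := by
      intro h0
      rw [h0, zero_smul] at hcontra
      exact one_ne_zero hcontra.symm
    have hβalg : algebraMap ℚ K a⁻¹ = β := by
      have h1 : a⁻¹ • (1 : K) = β := by
        rw [← hcontra, smul_smul, inv_mul_cancel₀ ha, one_smul]
      rw [← h1, Algebra.smul_def, mul_one]
    have hzero : algebraMap ℚ K (a⁻¹ ^ 2 + ((m : ℚ) - 1) * a⁻¹ - (m : ℚ) ^ 2) = 0 := by
      simp only [map_sub, map_add, map_mul, map_pow, map_one, map_intCast]
      rw [hβalg]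
      exact hβroot
    have := (algebraMap ℚ K).injective (hzero.trans (map_zero (algebraMap ℚ K)).symm)
    exact aux_no_root_g m hm hsf a⁻¹ this
  have li : LinearIndependent ℚ ![(1 : K), β] := by
    rw [linearIndependent_fin2]
    constructor
    · simpa using hβ0
    · intro a
      simpa using hβnotrat a
  have hcard : Fintype.card (Fin 2) = Module.finrank ℚ K := by
    rw [Fintype.card_fin, hrank]
  set b : Module.Basis (Fin 2) ℚ K := basisOfLinearIndependentOfCardEqFinrank li hcard with hbdef
  have hbc : ⇑b = ![(1 : K), β] := coe_basisOfLinearIndependentOfCardEqFinrank li hcard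
  have hb0 : b 0 = 1 := by rw [hbc]; rfl
  have hb1 : b 1 = β := by rw [hbc]; rfl
  have trace1 : Algebra.trace ℚ K 1 = 2 := by
    rw [← map_one (algebraMap ℚ K), Algebra.trace_algebraMap, hrank]
    norm_num
  have hββ : β * β = ((m : ℚ) ^ 2) • (1 : K) + (1 - (m : ℚ)) • β := by
    rw [Algebra.smul_def, Algebra.smul_def]
    simp only [map_pow, map_sub, map_one, map_intCast]
    linear_combination hβroot
  have hrepr1 : b.repr β = Finsupp.single 1 1 := by rw [← hb1, b.repr_self]
  have hreprββ : b.repr (β * β) =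
      ((m : ℚ) ^ 2) • Finsupp.single 0 1 + (1 - (m : ℚ)) • Finsupp.single 1 1 := by
    rw [hββ, ← hb0, ← hb1, map_add, map_smul, map_smul, b.repr_self, b.repr_self]
  have traceβ : Algebra.trace ℚ K β = 1 - (m : ℚ) := by
    rw [Algebra.trace_eq_matrix_trace b, Matrix.trace_fin_two, Algebra.leftMulMatrix_eq_repr_mul,
      Algebra.leftMulMatrix_eq_repr_mul, hb0, hb1, mul_one, hrepr1, hreprββ]
    simp [Finsupp.single_apply]
  have traceβ2 : Algebra.trace ℚ K (β * β) =
      ((m : ℚ) ^ 2) * 2 + (1 - (m : ℚ)) * (1 - (m : ℚ)) := by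
    rw [hββ, map_add, map_smul, map_smul, trace1, traceβ, smul_eq_mul, smul_eq_mul]
  have hdiscr_b : Algebra.discr ℚ ⇑b = ((5 * m ^ 2 - 2 * m + 1 : ℤ) : ℚ) := by
    rw [Algebra.discr_def, Matrix.det_fin_two]
    simp only [Algebra.traceMatrix_apply, Algebra.traceForm_apply, hb0, hb1, one_mul, mul_one]
    rw [trace1, traceβ, traceβ2]
    push_cast
    ring
  obtain ⟨q, hq⟩ := aux_discr K b (by
    intro i
    fin_cases i
    · simpa [hbc] using isIntegral_one
    · simpa [hbc] using hβint)
  have hDq : (5 * m ^ 2 - 2 * m + 1 : ℤ) = q ^ 2 * NumberField.discr K := by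
    have := hdiscr_b.symm.trans hq
    exact_mod_cast this
  have hqu : IsUnit q := hsf q ⟨NumberField.discr K, by rw [hDq]; ring⟩
  have hq2 : q ^ 2 = 1 := by rcases Int.isUnit_iff.mp hqu with h | h <;> simp [h]
  have hdiscr : NumberField.discr K = 5 * m ^ 2 - 2 * m + 1 := by
    rw [hq2, one_mul] at hDq
    exact hDq.symm
  have hpos : 0 < NumberField.discr K := by rw [hdiscr]; nlinarith
  have hmax : max |m| (max |m - 1| |(-m)|) = m := by
    have habs : |m - 1| ≤ m := abs_le.mpr ⟨by linarith, by linarith⟩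
    rw [abs_neg, abs_of_pos hm, max_eq_right habs, max_self]
  have hcastD : ((5 * m ^ 2 - 2 * m + 1 : ℤ) : ℝ) = 5 * (m : ℝ) ^ 2 - 2 * (m : ℝ) + 1 := by
    push_cast; ring
  have hfrac : ((max |m| (max |m - 1| |(-m)|) : ℤ) : ℝ) / Real.sqrt (NumberField.discr K : ℝ) =
      (m : ℝ) / Real.sqrt (5 * (m : ℝ) ^ 2 - 2 * (m : ℝ) + 1) := by
    rw [hmax, hdiscr, hcastD]
  exact ⟨hfirr, hrank, hdiscr, hpos, hfrac, aux_tendsto⟩
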